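/- Let M be a cofinitary matroid (the dual M* is finitary) on ground set E, let α be a limit ordinal, and let ⟨E_β : β < α⟩ be a sequence of subsets of E with limit E_α. If g ∈ span_M(E_β) for every β < α, then g ∈ span_M(E_α). -/

import Mathlib

open Set

/-- **Observation (ii).** For a cofinitary matroid `M`, if `g` is spanned by every member of a
transfinite sequence of sets having a limit, then `g` is spanned by the limit. -/
theorem span_of_limit {α : Type*} (M : Matroid α) [M✶.Finitary]
    (o : Ordinal) (ho : Order.IsSuccLimit o) (Eseq : Ordinal → Set α) (Elim : Set α)
    (hlim₁ : (⋃ γ ∈ Set.Iio o, ⋂ β ∈ Set.Ioo γ o, Eseq β) = Elim)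
    (hlim₂ : (⋂ γ ∈ Set.Iio o, ⋃ β ∈ Set.Ioo γ o, Eseq β) = Elim)
    (g : α) (hg : ∀ β < o, g ∈ M.closure (Eseq β)) :
    g ∈ M.closure Elim := by
  by_contra hgcl
  have hgE : g ∈ M.E := M.closure_subset_ground _ (hg 0 ho.pos)
  -- take a basis `I` of `Elim`, so `g ∉ closure I` and `insert g I` is independent
  obtain ⟨I, hI⟩ := M.exists_isBasis' Elim
  have hgI : g ∉ M.closure I := by rwa [hI.closure_eq_closure]
  have hins : M.Indep (insert g I) := by
    rw [hI.indep.insert_indep_iff]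
    exact Or.inl ⟨hgE, hgI⟩
  obtain ⟨B, hB, hIB⟩ := hins.exists_isBase_superset
  have hgB : g ∈ B := hIB (mem_insert _ _)
  set H := M.closure (B \ {g}) with hH
  have hHE : H ⊆ M.E := M.closure_subset_ground _
  have hgH : g ∉ H := hB.indep.notMem_closure_diff_of_mem hgB
  have hgnI : g ∉ I := fun hgi => hgI (M.subset_closure I hI.indep.subset_ground hgi)
  have hIBg : I ⊆ B \ {g} := fun x hx =>
    ⟨hIB (mem_insert_of_mem _ hx), fun hxg => hgnI (hxg ▸ hx)⟩
  have hclH : M.closure Elim ⊆ H := by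
    rw [← hI.closure_eq_closure, hH]
    exact M.closure_subset_closure hIBg
  set C := M.E \ H with hC
  have hgC : g ∈ C := ⟨hgE, hgH⟩
  -- the complement of `H` is dual-dependent
  have hCdep : ¬ M✶.Indep C := by
    intro h
    have hsp : M.Spanning (M.E \ C) := (M.coindep_iff_compl_spanning (diff_subset)).mp h
    rw [hC, diff_diff_cancel_left hHE] at hsp
    have : M.closure H = M.E := hsp.closure_eq
    rw [hH, M.closure_closure] at this
    exact hgH (by rw [hH, this]; exact hgE)
  -- every proper subset of `C` is dual-independent
  have hproper : ∀ C' ⊆ C, C' ≠ C → M✶.Indep C' := by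
    intro C' hC'C hne
    obtain ⟨x, hxC, hxC'⟩ : ∃ x, x ∈ C ∧ x ∉ C' := by
      by_contra h
      push_neg at h
      exact hne (hC'C.antisymm h)
    have hxH : x ∉ H := hxC.2
    have hxE : x ∈ M.E := hxC.1
    -- `insert x (B \ {g})` is spanning
    have hexch : g ∈ M.closure (insert x (B \ {g})) := by
      refine (Matroid.closure_exchange (e := x) (f := g) (X := B \ {g}) ⟨?_, hxH⟩).1
      rw [insert_diff_singleton, insert_eq_of_mem hgB, hB.closure_eq]
      exact hxE
    have hspan : M.Spanning (insert x (B \ {g})) := by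
      have hsub : B ⊆ M.closure (insert x (B \ {g})) := by
        intro b hb
        rcases eq_or_ne b g with rfl | hbg
        · exact hexch
        · exact M.subset_closure _ (insert_subset hxE (diff_subset.trans hB.subset_ground))
            (mem_insert_of_mem _ ⟨hb, hbg⟩)
      have : M.E ⊆ M.closure (insert x (B \ {g})) := by
        rw [← hB.closure_eq]
        exact (M.closure_subset_closure hsub).trans (by rw [M.closure_closure])
      rw [Matroid.spanning_iff_closure_eq
        (insert_subset hxE (diff_subset.trans hB.subset_ground))]
      exact (M.closure_subset_ground _).antisymm this
    have hsub2 : insert x (B \ {g}) ⊆ M.E \ C' := by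
      refine insert_subset ⟨hxE, hxC'⟩ fun b hb => ⟨hB.subset_ground hb.1, fun hbC' => ?_⟩
      have hbC : b ∈ C := hC'C hbC'
      exact hbC.2 (M.subset_closure _ (diff_subset.trans hB.subset_ground) hb)
    refine (M.coindep_iff_compl_spanning (hC'C.trans diff_subset)).mpr ?_
    exact hspan.superset hsub2 diff_subset
  -- by cofinitariness, `C` is finite
  have hCfin : C.Finite := by
    by_contra hCinf
    refine hCdep (Matroid.indep_of_forall_finite_subset_indep C fun J hJC hJfin => ?_)
    refine hproper J hJC fun hJeq => hCinf (hJeq ▸ hJfin)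
  -- every element of `C` is outside `Elim`
  have hCElim : ∀ c ∈ C, c ∉ Elim := by
    intro c hc hcE
    exact hc.2 (hclH (M.closure_inter_ground Elim ▸
      M.subset_closure _ inter_subset_right ⟨hcE, hc.1⟩))
  -- pick, for each `c ∈ C`, a stage after which `c` never appears
  have hex : ∀ c ∈ C, ∃ γ < o, ∀ β, γ < β → β < o → c ∉ Eseq β := by
    intro c hc
    have : c ∉ (⋂ γ ∈ Set.Iio o, ⋃ β ∈ Set.Ioo γ o, Eseq β) := hlim₂ ▸ hCElim c hc
    simp only [mem_iInter, mem_iUnion, mem_Iio, mem_Ioo, not_forall, not_exists] at this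
    obtain ⟨γ, hγo, hγ⟩ := this
    exact ⟨γ, hγo, fun β h1 h2 => hγ β ⟨h1, h2⟩⟩
  choose! f hf1 hf2 using hex
  -- take a stage beyond all of them
  set γ₀ := hCfin.toFinset.sup f with hγ₀
  have hγ₀o : γ₀ < o := by
    refine Finset.sup_lt_iff (by simpa using ho.pos) |>.mpr fun c hc => ?_
    exact hf1 c (hCfin.mem_toFinset.mp hc)
  set β := Order.succ γ₀ with hβ
  have hβo : β < o := ho.succ_lt hγ₀o
  have hdisj : ∀ c ∈ C, c ∉ Eseq β := by
    intro c hc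
    refine hf2 c hc β (lt_of_le_of_lt ?_ (Order.lt_succ γ₀)) hβo
    exact Finset.le_sup (hCfin.mem_toFinset.mpr hc)
  -- then `Eseq β ∩ M.E ⊆ H`, so `g ∈ H`, contradiction
  have hsub : Eseq β ∩ M.E ⊆ H := by
    intro x hx
    by_contra hxH
    exact hdisj x ⟨hx.2, hxH⟩ hx.1
  have : g ∈ H := by
    have h1 : M.closure (Eseq β) ⊆ H := by
      rw [← M.closure_inter_ground (Eseq β)]
      have h2 : M.closure H = H := by rw [hH, M.closure_closure]
      exact (M.closure_subset_closure hsub).trans h2.subset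
    exact h1 (hg β hβo)
  exact hgH this
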